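/- Let n ≥ 2 be an integer and define Δ_u = Σ_{j=1}^{n} (n^j + n^{j+1})·(j + 1 + n^{−j}). Let S ⊆ {1,…,n} with |S| = k, and let c : {1,…,n} \ S → ℝ be any function with c(j) ∈ {j + 1, j + 1 + n^{−j}} for each j ∉ S. Put g = Σ_{j ∈ S} (n^j + n^{j+1})·(j + 1) + Σ_{j ∉ S} ( n^{j+1}·(j + 1 + n^{−j}) + n^j·c(j) ). Then Δ_u − (k + 1)(n + 1) < g ≤ Δ_u − k(n + 1). -/

import Mathlib

/-- Quantitative content of Lemma 1 of the NP-hardness reduction: the GGI value `g`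
of the stable marriage corresponding to a truth assignment with set `S` of
unsatisfied clauses (|S| = k) satisfies `Δu − (k+1)(n+1) < g ≤ Δu − k(n+1)`. -/
theorem lemma1_bounds (n : ℕ) (hn : 2 ≤ n) (S : Finset ℕ) (hS : S ⊆ Finset.Icc 1 n)
    (k : ℕ) (hk : S.card = k) (c : ℕ → ℝ)
    (hc : ∀ j ∈ Finset.Icc 1 n \ S,
      c j = (j : ℝ) + 1 ∨ c j = (j : ℝ) + 1 + ((n : ℝ) ^ j)⁻¹) :
    let Δu : ℝ := ∑ j ∈ Finset.Icc 1 n,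
      ((n : ℝ) ^ j + (n : ℝ) ^ (j + 1)) * ((j : ℝ) + 1 + ((n : ℝ) ^ j)⁻¹)
    let g : ℝ := (∑ j ∈ S, ((n : ℝ) ^ j + (n : ℝ) ^ (j + 1)) * ((j : ℝ) + 1))
      + ∑ j ∈ Finset.Icc 1 n \ S,
          ((n : ℝ) ^ (j + 1) * ((j : ℝ) + 1 + ((n : ℝ) ^ j)⁻¹) + (n : ℝ) ^ j * c j)
    Δu - ((k : ℝ) + 1) * ((n : ℝ) + 1) < g ∧ g ≤ Δu - (k : ℝ) * ((n : ℝ) + 1) := by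
  intro Δu g
  have hn0 : (0:ℝ) < (n:ℝ) := by positivity
  have hpow : ∀ j : ℕ, ((n:ℝ) ^ j) ≠ 0 := fun j => by positivity
  set T := Finset.Icc 1 n \ S with hT
  have hsplit : Δu = (∑ j ∈ S, ((n : ℝ) ^ j + (n : ℝ) ^ (j + 1)) * ((j : ℝ) + 1 + ((n : ℝ) ^ j)⁻¹))
      + ∑ j ∈ T, ((n : ℝ) ^ j + (n : ℝ) ^ (j + 1)) * ((j : ℝ) + 1 + ((n : ℝ) ^ j)⁻¹) := by
    rw [add_comm]
    exact (Finset.sum_sdiff hS).symm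
  have key : Δu - g = (k:ℝ) * ((n:ℝ) + 1)
      + ∑ j ∈ T, (n:ℝ) ^ j * ((j:ℝ) + 1 + ((n:ℝ) ^ j)⁻¹ - c j) := by
    rw [hsplit]
    show _ + _ - (_ + _) = _
    rw [← hT, show ∀ a b cc d : ℝ, a + b - (cc + d) = (a - cc) + (b - d) from fun a b cc d => by ring,
      ← Finset.sum_sub_distrib, ← Finset.sum_sub_distrib]
    congr 1
    · have : ∀ j ∈ S, ((n : ℝ) ^ j + (n : ℝ) ^ (j + 1)) * ((j : ℝ) + 1 + ((n : ℝ) ^ j)⁻¹)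
          - ((n : ℝ) ^ j + (n : ℝ) ^ (j + 1)) * ((j : ℝ) + 1) = (n:ℝ) + 1 := by
        intro j _
        field_simp
        ring
      rw [Finset.sum_congr rfl this, Finset.sum_const, hk, nsmul_eq_mul]
    · refine Finset.sum_congr rfl fun j _ => ?_
      ring
  have hterm : ∀ j ∈ T, (0:ℝ) ≤ (n:ℝ) ^ j * ((j:ℝ) + 1 + ((n:ℝ) ^ j)⁻¹ - c j)
      ∧ (n:ℝ) ^ j * ((j:ℝ) + 1 + ((n:ℝ) ^ j)⁻¹ - c j) ≤ 1 := by
    intro j hj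
    rcases hc j hj with h | h <;> rw [h]
    · have : (n:ℝ) ^ j * ((j:ℝ) + 1 + ((n:ℝ) ^ j)⁻¹ - ((j:ℝ) + 1)) = 1 := by
        field_simp
        ring
      rw [this]; norm_num
    · have : (n:ℝ) ^ j * ((j:ℝ) + 1 + ((n:ℝ) ^ j)⁻¹ - ((j:ℝ) + 1 + ((n:ℝ) ^ j)⁻¹)) = 0 := by
        ring
      rw [this]; norm_num
  have hsum0 : (0:ℝ) ≤ ∑ j ∈ T, (n:ℝ) ^ j * ((j:ℝ) + 1 + ((n:ℝ) ^ j)⁻¹ - c j) :=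
    Finset.sum_nonneg fun j hj => (hterm j hj).1
  have hsum1 : ∑ j ∈ T, (n:ℝ) ^ j * ((j:ℝ) + 1 + ((n:ℝ) ^ j)⁻¹ - c j) ≤ (T.card : ℝ) := by
    calc _ ≤ ∑ j ∈ T, (1:ℝ) := Finset.sum_le_sum fun j hj => (hterm j hj).2
    _ = (T.card : ℝ) := by simp
  have hcard : T.card ≤ n := by
    calc T.card ≤ (Finset.Icc 1 n).card := Finset.card_le_card (Finset.sdiff_subset)
    _ = n := by simp
  have hsumn : ∑ j ∈ T, (n:ℝ) ^ j * ((j:ℝ) + 1 + ((n:ℝ) ^ j)⁻¹ - c j) ≤ (n:ℝ) :=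
    hsum1.trans (by exact_mod_cast hcard)
  clear_value Δu g
  have hexp : ((k:ℝ) + 1) * ((n:ℝ) + 1) = (k:ℝ) * ((n:ℝ) + 1) + ((n:ℝ) + 1) := by ring
  constructor
  · linarith [key, hsumn]
  · linarith [key, hsum0]
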